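/- The element [s⁻¹ a^h s, a^p b⁻¹] of G_{p,q} is mapped to the identity by every homomorphism from G_{p,q} to a finite group, whenever p, q are nonzero integers with q ∤ 2p and h = gcd(2p, q). -/

import Mathlib

/-- The free group generators: 0 ↦ a, 1 ↦ b, 2 ↦ s, 3 ↦ t. -/
def ga : FreeGroup (Fin 4) := FreeGroup.of 0
def gb : FreeGroup (Fin 4) := FreeGroup.of 1
def gs : FreeGroup (Fin 4) := FreeGroup.of 2
def gt : FreeGroup (Fin 4) := FreeGroup.of 3

/-- Relators of the tubular group `G_{p,q}`. -/
def tubularRels (p q : ℤ) : Set (FreeGroup (Fin 4)) :=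
  { ga * gb * ga⁻¹ * gb⁻¹,
    gs⁻¹ * ga ^ q * gs * (ga ^ p * gb)⁻¹,
    gt⁻¹ * ga ^ q * gt * (ga ^ p * gb⁻¹)⁻¹ }

open scoped commutatorElement


lemma key_commute {F : Type} [Group F] [Finite F] (p q : ℤ) (h : ℕ)
    (hh : h = Int.gcd (2 * p) q)
    (A B S T : F) (hcomm : Commute A B)
    (relS : S⁻¹ * A ^ q * S = A ^ p * B)
    (relT : T⁻¹ * A ^ q * T = A ^ p * B⁻¹) :
    Commute (S⁻¹ * A ^ (h : ℤ) * S) (A ^ p * B⁻¹) := by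
  have conjpow : ∀ (x : F) (n : ℕ), (S⁻¹ * x * S) ^ n = S⁻¹ * x ^ n * S := by
    intro x n; simpa using conj_pow (i := n) (a := S⁻¹) (b := x)
  have conjpowT : ∀ (x : F) (n : ℕ), (T⁻¹ * x * T) ^ n = T⁻¹ * x ^ n * T := by
    intro x n; simpa using conj_pow (i := n) (a := T⁻¹) (b := x)
  have conjzpow : ∀ (x : F) (n : ℤ), (S⁻¹ * x * S) ^ n = S⁻¹ * x ^ n * S := by
    intro x n; simpa using conj_zpow (i := n) (a := S⁻¹) (b := x)
  set r := orderOf A with hr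
  set m := orderOf (A ^ q) with hmdef
  have hm0 : m ≠ 0 := (orderOf_pos _).ne'
  have hm1 : (A ^ q) ^ m = 1 := pow_orderOf_eq_one _
  have hSm : (A ^ p * B) ^ m = 1 := by
    rw [← relS, conjpow, hm1, mul_one, inv_mul_cancel]
  have hTm : (A ^ p * B⁻¹) ^ m = 1 := by
    rw [← relT, conjpowT, hm1, mul_one, inv_mul_cancel]
  have hc2 : Commute (A ^ p) B := hcomm.zpow_left p
  have cAB : Commute (A ^ p * B) (A ^ p * B⁻¹) :=
    (((Commute.refl (A ^ p)).mul_right hc2.inv_right).mul_left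
      (hc2.symm.mul_right (Commute.refl B).inv_right))
  have hprod : A ^ p * B * (A ^ p * B⁻¹) = A ^ (2 * p) := by
    calc A ^ p * B * (A ^ p * B⁻¹) = A ^ p * (B * A ^ p) * B⁻¹ := by group
      _ = A ^ p * (A ^ p * B) * B⁻¹ := by rw [hc2.symm.eq]
      _ = A ^ (2 * p) := by rw [two_mul, zpow_add]; group
  have hA2pm : A ^ (2 * p * (m : ℤ)) = 1 := by
    rw [zpow_mul, zpow_natCast, ← hprod, cAB.mul_pow, hSm, hTm, mul_one]
  have hrdvd : (r : ℤ) ∣ 2 * p * (m : ℤ) := orderOf_dvd_iff_zpow_eq_one.mpr hA2pm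
  set g := Nat.gcd r q.natAbs with hgdef
  have hmval : m = r / g := by
    rcases Int.natAbs_eq q with hq' | hq'
    · rw [hmdef, hq', zpow_natCast, orderOf_pow]
    · rw [hmdef, hq', zpow_neg, zpow_natCast, orderOf_inv, orderOf_pow]
  have hgm : g * m = r := by rw [hmval]; exact Nat.mul_div_cancel' (Nat.gcd_dvd_left _ _)
  have hg2p : (g : ℤ) ∣ 2 * p := by
    obtain ⟨k, hk⟩ := hrdvd
    refine ⟨k, mul_right_cancel₀ (by exact_mod_cast hm0 : (m : ℤ) ≠ 0) ?_⟩
    rw [hk, ← hgm]; push_cast; ring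
  have hgq : (g : ℤ) ∣ q := by
    exact dvd_trans (Int.natCast_dvd_natCast.mpr (Nat.gcd_dvd_right _ _))
      (Int.natAbs_dvd.mpr dvd_rfl)
  have hgh : (g : ℤ) ∣ (h : ℤ) := by
    rw [hh]; exact_mod_cast Int.dvd_gcd hg2p hgq
  have hbez : (g : ℤ) = (r : ℤ) * Int.gcdA r q + q * Int.gcdB r q := by
    have := Int.gcd_eq_gcd_ab (r : ℤ) q
    simpa [Int.gcd, hgdef] using this
  obtain ⟨c, hc⟩ := hgh
  have hAr : A ^ ((r : ℤ)) = 1 := by rw [zpow_natCast]; exact pow_orderOf_eq_one A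
  have hAg : A ^ ((g : ℤ)) = (A ^ q) ^ (Int.gcdB (r:ℤ) q) := by
    rw [hbez, zpow_add, zpow_mul, zpow_mul, hAr, one_zpow, one_mul]
  have hAh : A ^ (h : ℤ) = (A ^ q) ^ (Int.gcdB (r:ℤ) q * c) := by
    rw [hc, zpow_mul, hAg, ← zpow_mul]
  have hfin : S⁻¹ * A ^ (h : ℤ) * S = (A ^ p * B) ^ (Int.gcdB (r:ℤ) q * c) := by
    rw [hAh, ← conjzpow, relS]
  rw [hfin]
  exact cAB.zpow_left _

/-- If q ∤ 2p and h = gcd(2p, q), the element [s⁻¹ a^h s, a^p b⁻¹] of G_{p,q}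
is killed by every homomorphism to a finite group. -/
theorem commutator_dies_in_finite_quotients (p q : ℤ) (hp : p ≠ 0) (hq : q ≠ 0)
    (hnd : ¬ q ∣ 2 * p) (h : ℕ) (hh : h = Int.gcd (2 * p) q)
    (F : Type) [Group F] [Finite F]
    (φ : PresentedGroup (tubularRels p q) →* F) :
    φ ⁅(PresentedGroup.of 2 : PresentedGroup (tubularRels p q))⁻¹ *
          (PresentedGroup.of 0) ^ (h : ℤ) * PresentedGroup.of 2,
        (PresentedGroup.of 0) ^ p * (PresentedGroup.of 1)⁻¹⁆ = 1 := by
  set ψ := φ.comp (PresentedGroup.mk (tubularRels p q)) with hψ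
  set A := ψ ga with hA
  set B := ψ gb with hB
  set S := ψ gs with hS
  set T := ψ gt with hT
  have hrel : ∀ w ∈ tubularRels p q, ψ w = 1 := by
    intro w hw
    have : PresentedGroup.mk (tubularRels p q) w = 1 :=
      (QuotientGroup.eq_one_iff w).mpr (Subgroup.subset_normalClosure hw)
    simp [hψ, MonoidHom.comp_apply, this]
  have m1 : (ga * gb * ga⁻¹ * gb⁻¹ : FreeGroup (Fin 4)) ∈ tubularRels p q :=
    Set.mem_insert _ _
  have m2 : (gs⁻¹ * ga ^ q * gs * (ga ^ p * gb)⁻¹ : FreeGroup (Fin 4)) ∈ tubularRels p q :=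
    Set.mem_insert_of_mem _ (Set.mem_insert _ _)
  have m3 : (gt⁻¹ * ga ^ q * gt * (ga ^ p * gb⁻¹)⁻¹ : FreeGroup (Fin 4)) ∈ tubularRels p q :=
    Set.mem_insert_of_mem _ (Set.mem_insert_of_mem _ rfl)
  have hcomm : Commute A B := by
    have h1 := hrel _ m1
    simp only [map_mul, map_inv, ← hA, ← hB] at h1
    exact commutatorElement_eq_one_iff_commute.mp
      (by rw [commutatorElement_def]; exact h1)
  have relS : S⁻¹ * A ^ q * S = A ^ p * B := by
    have h2 := hrel _ m2
    simp only [map_mul, map_inv, map_zpow, ← hA, ← hB, ← hS] at h2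
    exact mul_inv_eq_one.mp h2
  have relT : T⁻¹ * A ^ q * T = A ^ p * B⁻¹ := by
    have h3 := hrel _ m3
    simp only [map_mul, map_inv, map_zpow, ← hA, ← hB, ← hT] at h3
    exact mul_inv_eq_one.mp h3
  have key := key_commute p q h hh A B S T hcomm relS relT
  have e0 : (PresentedGroup.of 0 : PresentedGroup (tubularRels p q)) =
      PresentedGroup.mk (tubularRels p q) ga := rfl
  have e1 : (PresentedGroup.of 1 : PresentedGroup (tubularRels p q)) =
      PresentedGroup.mk (tubularRels p q) gb := rfl
  have e2 : (PresentedGroup.of 2 : PresentedGroup (tubularRels p q)) =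
      PresentedGroup.mk (tubularRels p q) gs := rfl
  rw [e0, e1, e2, map_commutatorElement]
  simp only [map_mul, map_inv, map_zpow]
  have fA : φ (PresentedGroup.mk (tubularRels p q) ga) = A := rfl
  have fB : φ (PresentedGroup.mk (tubularRels p q) gb) = B := rfl
  have fS : φ (PresentedGroup.mk (tubularRels p q) gs) = S := rfl
  rw [fA, fB, fS]
  exact commutatorElement_eq_one_iff_commute.mpr key
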